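/- In the good/bad/ugly setting, for every i with 0 ≤ i ≤ m one has ‖ugly^i‖ ≤ Σ_{j=1}^{i} ‖Π_bad A^j‖. In particular, if ε ≥ 0 and ‖Π_bad A^j‖ ≤ ε for all 1 ≤ j ≤ i, then ‖ugly^i‖ ≤ i·ε. -/

import Mathlib

theorem welded_tree_ugly_le_sum_proj_bad_A
    {{H : Type*}} [NormedAddCommGroup H] [InnerProductSpace ℂ H]
    (m : ℕ) (C : ℕ → (H ≃ₗᵢ[ℂ] H))
    (P : H →L[ℂ] H)
    (hPidem : ∀ x : H, P (P x) = P x)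
    (hPsa : ∀ x y : H, (inner ℂ (P x) y : ℂ) = inner ℂ x (P y))
    (ψ0 : H) (hψ0 : ‖ψ0‖ = 1) (hψ0bad : P ψ0 = 0)
    (A good bad ugly : ℕ → H)
    (hA0 : A 0 = ψ0)
    (hA : ∀ i : ℕ, 1 ≤ i → i ≤ m → A i = C i (A (i - 1)))
    (hgood0 : good 0 = ψ0) (hbad0 : bad 0 = 0) (hugly0 : ugly 0 = 0)
    (hgood : ∀ i : ℕ, 1 ≤ i → i ≤ m →
      good i = C i (good (i - 1)) - P (C i (good (i - 1))))
    (hbad : ∀ i : ℕ, 1 ≤ i → i ≤ m → bad i = P (C i (good (i - 1))))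
    (hugly : ∀ i : ℕ, 1 ≤ i → i ≤ m → ugly i = bad i + C i (ugly (i - 1))) :
    ∀ i : ℕ, i ≤ m →
      ‖ugly i‖ ≤ ∑ j ∈ Finset.Icc 1 i, ‖P (A j)‖ ∧
      ∀ ε : ℝ, 0 ≤ ε → (∀ j : ℕ, 1 ≤ j → j ≤ i → ‖P (A j)‖ ≤ ε) →
        ‖ugly i‖ ≤ (i : ℝ) * ε := by
  -- (1 - P) is a contraction
  have hcontr : ∀ x : H, ‖x - P x‖ ≤ ‖x‖ := by
    intro x
    have horth : (inner ℂ (P x) (x - P x) : ℂ) = 0 := by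
      rw [hPsa]
      have : P (x - P x) = 0 := by
        rw [map_sub, hPidem, sub_self]
      rw [this, inner_zero_right]
    have hsq : ‖P x + (x - P x)‖ * ‖P x + (x - P x)‖ = ‖P x‖ * ‖P x‖ + ‖x - P x‖ * ‖x - P x‖ :=
      norm_add_sq_eq_norm_sq_add_norm_sq_of_inner_eq_zero _ _ horth
    have hx : P x + (x - P x) = x := by abel
    rw [hx] at hsq
    nlinarith [norm_nonneg (P x), norm_nonneg (x - P x), norm_nonneg x]
  have key : ∀ i : ℕ, i ≤ m →
      A i = good i + ugly i ∧ ‖ugly i‖ ≤ ∑ j ∈ Finset.Icc 1 i, ‖P (A j)‖ := by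
    intro i
    induction i with
    | zero =>
      intro _
      simp [hA0, hgood0, hugly0]
    | succ n ih =>
      intro hnm
      have hn : n ≤ m := Nat.le_of_succ_le hnm
      obtain ⟨hAn, hun⟩ := ih hn
      have h1 : 1 ≤ n + 1 := Nat.succ_le_succ (Nat.zero_le n)
      have hAs : A (n + 1) = C (n + 1) (A n) := by
        simpa using hA (n + 1) h1 hnm
      have hgs : good (n + 1) = C (n + 1) (good n) - P (C (n + 1) (good n)) := by
        simpa using hgood (n + 1) h1 hnm
      have hbs : bad (n + 1) = P (C (n + 1) (good n)) := by
        simpa using hbad (n + 1) h1 hnm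
      have hus : ugly (n + 1) = bad (n + 1) + C (n + 1) (ugly n) := by
        simpa using hugly (n + 1) h1 hnm
      have hAsplit : A (n + 1) = C (n + 1) (good n) + C (n + 1) (ugly n) := by
        rw [hAs, hAn, map_add]
      constructor
      · rw [hAsplit, hgs, hus, hbs]; abel
      · have hPA : P (A (n + 1)) = bad (n + 1) + P (C (n + 1) (ugly n)) := by
          rw [hAsplit, map_add, hbs]
        have huexp : ugly (n + 1)
            = P (A (n + 1)) + (C (n + 1) (ugly n) - P (C (n + 1) (ugly n))) := by
          rw [hPA, hus]; abel
        calc ‖ugly (n + 1)‖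
            ≤ ‖P (A (n + 1))‖ + ‖C (n + 1) (ugly n) - P (C (n + 1) (ugly n))‖ := by
              rw [huexp]; exact norm_add_le _ _
          _ ≤ ‖P (A (n + 1))‖ + ‖C (n + 1) (ugly n)‖ := by
              gcongr
              exact hcontr _
          _ = ‖P (A (n + 1))‖ + ‖ugly n‖ := by
              rw [(C (n + 1)).norm_map]
          _ ≤ ‖P (A (n + 1))‖ + ∑ j ∈ Finset.Icc 1 n, ‖P (A j)‖ := by gcongr
          _ = ∑ j ∈ Finset.Icc 1 (n + 1), ‖P (A j)‖ := by
              rw [Finset.sum_Icc_succ_top h1]; ring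
  intro i hi
  refine ⟨(key i hi).2, ?_⟩
  intro ε hε hbound
  calc ‖ugly i‖ ≤ ∑ j ∈ Finset.Icc 1 i, ‖P (A j)‖ := (key i hi).2
    _ ≤ ∑ j ∈ Finset.Icc 1 i, ε := by
        apply Finset.sum_le_sum
        intro j hj
        rw [Finset.mem_Icc] at hj
        exact hbound j hj.1 hj.2
    _ = (i : ℝ) * ε := by
        rw [Finset.sum_const, Nat.card_Icc]
        simp [nsmul_eq_mul]
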